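/- arXiv:1502.03702 — 3 statements merged into one kernel-verified Lean document; each statement's English description precedes it below -/
import Mathlib

section
/- For every integer r ≥ 1 there holds Σ_{i=1}^{r} e_{2i} · g_{2i,2r} = (q^{r(2r-1)} - 1)/(q - 1) in K. -/
open Finset

/-- The indeterminate `q` in the field `K = RatFunc ℚ`. -/
noncomputable def q : RatFunc ℚ := RatFunc.X

/-- Gaussian binomial coefficient `[m, r]_x` with integer arguments:
`∏_{i=0}^{r-1} (1 - x^(m-i))/(1 - x^(i+1))` if `0 ≤ r ≤ m`, and `0` otherwise. -/
noncomputable def gauss (x : RatFunc ℚ) (m r : ℤ) : RatFunc ℚ :=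
  if 0 ≤ r ∧ r ≤ m then
    ∏ i ∈ Finset.range r.toNat, (1 - x ^ (m - (i : ℤ))) / (1 - x ^ ((i : ℤ) + 1))
  else 0

/-- `e_{2i}`: the E-polynomial of the space of nondegenerate skew forms on `ℂ^{2i}`
up to scaling: `q^{i(i-1)} (∏_{j=1}^{i} (q^{2j-1} - 1))/(q - 1)`. -/
noncomputable def e (i : ℤ) : RatFunc ℚ :=
  q ^ (i * (i - 1)) * (∏ j ∈ Finset.Icc (1 : ℤ) i, (q ^ (2 * j - 1) - 1)) / (q - 1)

abbrev K := RatFunc ℚ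

lemma X_pow_ne_one {m : ℕ} (hm : m ≠ 0) : q ^ m ≠ (1 : K) := by
  intro h
  have h2 : (algebraMap (Polynomial ℚ) K) (Polynomial.X ^ m) = algebraMap (Polynomial ℚ) K 1 := by
    simpa [q, RatFunc.algebraMap_X] using h
  have h3 : (Polynomial.X : Polynomial ℚ) ^ m = 1 := RatFunc.algebraMap_injective ℚ h2
  have := congrArg Polynomial.natDegree h3
  simp [Polynomial.natDegree_X_pow] at this
  exact hm this

lemma one_sub_X_pow_ne {m : ℕ} (hm : m ≠ 0) : (1 : K) - q ^ m ≠ 0 :=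
  sub_ne_zero.mpr (Ne.symm (X_pow_ne_one hm))

lemma q_ne_zero : (q : K) ≠ 0 := by
  simp [q, RatFunc.X_ne_zero]

lemma q_sub_one_ne : (q : K) - 1 ≠ 0 := by
  have := one_sub_X_pow_ne (m := 1) one_ne_zero
  intro h; apply this; rw [pow_one]; linear_combination -h

/-- numerator product -/
noncomputable def Pnum (n k : ℕ) : K := ∏ i ∈ range k, (1 - q ^ (n - i))
noncomputable def Pden (k : ℕ) : K := ∏ i ∈ range k, (1 - q ^ (i + 1))

lemma Pden_ne (k : ℕ) : Pden k ≠ 0 := by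
  unfold Pden
  exact prod_ne_zero_iff.mpr fun i _ => one_sub_X_pow_ne (Nat.succ_ne_zero i)

lemma Pden_succ (k : ℕ) : Pden (k + 1) = Pden k * (1 - q ^ (k + 1)) := prod_range_succ _ _

lemma Pnum_succ (n k : ℕ) : Pnum n (k + 1) = Pnum n k * (1 - q ^ (n - k)) := prod_range_succ _ _

lemma Pnum_succ' (n k : ℕ) : Pnum (n + 1) (k + 1) = (1 - q ^ (n + 1)) * Pnum n k := by
  unfold Pnum
  rw [prod_range_succ']
  rw [mul_comm]
  congr 1
  apply prod_congr rfl
  intro i _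
  congr 2
  omega

/-- the natural-number Gaussian binomial -/
noncomputable def g (n k : ℕ) : K := if k ≤ n then Pnum n k / Pden k else 0

lemma g_zero (n : ℕ) : g n 0 = 1 := by simp [g, Pnum, Pden]

lemma g_of_lt {n k : ℕ} (h : n < k) : g n k = 0 := by simp [g, Nat.not_le.mpr h]

lemma g_eq {n k : ℕ} (h : k ≤ n) : g n k = Pnum n k / Pden k := by simp [g, h]

/-- R1 -/
lemma R1 (n k : ℕ) : (1 - q ^ (k + 1)) * g (n + 1) (k + 1) = (1 - q ^ (n + 1)) * g n k := by
  by_cases h : k ≤ n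
  · have h1 : Pden k ≠ 0 := Pden_ne k
    have h2 : (1 : K) - q ^ (k + 1) ≠ 0 := one_sub_X_pow_ne (Nat.succ_ne_zero k)
    rw [g_eq (by omega : k + 1 ≤ n + 1), g_eq h, Pnum_succ', Pden_succ,
      mul_div_assoc', mul_div_assoc', div_eq_div_iff (mul_ne_zero h1 h2) h1]
    ring
  · rw [g_of_lt (by omega), g_of_lt (by omega), mul_zero, mul_zero]

/-- R2 -/
lemma R2 (n k : ℕ) : (1 - q ^ (k + 1)) * g n (k + 1) = (1 - q ^ (n - k)) * g n k := by
  rcases lt_trichotomy k n with h | h | h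
  · have h1 : Pden k ≠ 0 := Pden_ne k
    have h2 : (1 : K) - q ^ (k + 1) ≠ 0 := one_sub_X_pow_ne (Nat.succ_ne_zero k)
    rw [g_eq (by omega : k + 1 ≤ n), g_eq (by omega : k ≤ n), Pnum_succ, Pden_succ,
      mul_div_assoc', mul_div_assoc', div_eq_div_iff (mul_ne_zero h1 h2) h1]
    ring
  · subst h
    rw [g_of_lt (by omega), Nat.sub_self]
    simp
  · rw [g_of_lt (by omega), g_of_lt (by omega)]
    simp

/-- R3 (absorption) -/
lemma R3 (n k : ℕ) : (1 - q ^ (n + 1 - k)) * g (n + 1) k = (1 - q ^ (n + 1)) * g n k := by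
  rcases Nat.lt_or_ge n k with h | h
  · rcases Nat.lt_or_ge (n + 1) k with h2 | h2
    · rw [g_of_lt h2, g_of_lt h, mul_zero, mul_zero]
    · have hk : k = n + 1 := by omega
      subst hk
      rw [g_of_lt (Nat.lt_succ_self n), Nat.sub_self]
      simp
  · have h1 : Pden k ≠ 0 := Pden_ne k
    have hnum : (1 - q ^ (n + 1 - k)) * Pnum (n + 1) k = (1 - q ^ (n + 1)) * Pnum n k := by
      have h2 : Pnum (n + 1) k * (1 - q ^ (n + 1 - k)) = (1 - q ^ (n + 1)) * Pnum n k := by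
        rw [← Pnum_succ, Pnum_succ']
      linear_combination h2
    rw [g_eq (by omega : k ≤ n + 1), g_eq h, mul_div_assoc', mul_div_assoc',
      div_eq_div_iff h1 h1]
    linear_combination Pden k * hnum

/-- Pascal: g (n+1) (k+1) = g n (k+1) + q^(n-k) * g n k, for k ≤ n. -/
lemma pascal {n k : ℕ} (h : k ≤ n) :
    g (n + 1) (k + 1) = g n (k + 1) + q ^ (n - k) * g n k := by
  have h2 : (1 : K) - q ^ (k + 1) ≠ 0 := one_sub_X_pow_ne (Nat.succ_ne_zero k)
  apply mul_left_cancel₀ h2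
  rw [R1, mul_add, R2]
  have hp : q ^ (n - k) * q ^ (k + 1) = q ^ (n + 1) := by
    rw [← pow_add]
    congr 1
    omega
  linear_combination (g n k) * hp

noncomputable def A (i : ℕ) : K := q ^ (i * (i - 1)) * ∏ j ∈ range i, (q ^ (2 * j + 1) - 1)

lemma A_zero : A 0 = 1 := by simp [A]

lemma A_succ (i : ℕ) : A (i + 1) = A i * (q ^ (2 * i) * (q ^ (2 * i + 1) - 1)) := by
  unfold A
  rw [prod_range_succ]
  have he : (i + 1) * (i + 1 - 1) = i * (i - 1) + 2 * i := by
    cases i with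
    | zero => rfl
    | succ j => simp [Nat.succ_sub_one]; ring
  rw [he, pow_add]
  ring

noncomputable def F (n : ℕ) : K := ∑ i ∈ range (n + 1), A i * g n (2 * i)

noncomputable def L (n : ℕ) : K :=
  ∑ i ∈ range n, A (i + 1) * q ^ (2 * (n - 1 - i)) * g n (2 * i + 1)

lemma L_ext (n : ℕ) :
    L n = ∑ i ∈ range (n + 1), A (i + 1) * q ^ (2 * (n - 1 - i)) * g n (2 * i + 1) := by
  rw [sum_range_succ, g_of_lt (by omega), mul_zero, add_zero]
  rfl

lemma F_split (n : ℕ) :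
    F n = 1 + ∑ i ∈ range (n + 1), A (i + 1) * g n (2 * (i + 1)) := by
  unfold F
  rw [sum_range_succ (f := fun i => A (i + 1) * g n (2 * (i + 1))),
    g_of_lt (show n < 2 * (n + 1) by omega), mul_zero, add_zero,
    sum_range_succ']
  rw [A_zero, mul_zero, g_zero, one_mul, add_comm]

lemma F_prev (n : ℕ) :
    ∑ i ∈ range (n + 1), A i * g (n - 1) (2 * i) = F (n - 1) := by
  unfold F
  rcases Nat.eq_zero_or_pos n with h | h
  · subst h; rfl
  · rw [show n - 1 + 1 = n by omega]
    rw [sum_range_succ, g_of_lt (by omega), mul_zero, add_zero]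

/-- per-term identity for the even recursion -/
lemma termF (n i : ℕ) :
    q ^ n * g (n + 1) (2 * (i + 1)) =
      q ^ n * g n (2 * (i + 1)) + q ^ (2 * (n - 1 - i)) * q * g n (2 * i + 1) := by
  by_cases h : 2 * i + 1 ≤ n
  · have hp := pascal (n := n) (k := 2 * i + 1) h
    have he : q ^ n * q ^ (n - (2 * i + 1)) = q ^ (2 * (n - 1 - i)) * q := by
      rw [← pow_add, ← pow_succ]
      congr 1
      omega
    rw [show 2 * (i + 1) = (2 * i + 1) + 1 by ring, hp]
    linear_combination (g n (2 * i + 1)) * he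
  · rw [g_of_lt (show n < 2 * i + 1 by omega), g_of_lt (show n < 2 * (i + 1) by omega),
      g_of_lt (show n + 1 < 2 * (i + 1) by omega)]
    simp

/-- even recursion: X^n F(n+1) = X^n F n + X · L n -/
lemma recF (n : ℕ) : q ^ n * F (n + 1) = q ^ n * F n + q * L n := by
  rw [F_split (n + 1), F_split n, L_ext n]
  rw [sum_range_succ (f := fun i => A (i + 1) * g (n + 1) (2 * (i + 1))),
    g_of_lt (show n + 1 < 2 * (n + 1 + 1) by omega), mul_zero, add_zero]
  rw [mul_add, mul_add, mul_one, mul_sum, mul_sum, mul_sum]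
  rw [add_assoc, ← sum_add_distrib]
  congr 1
  apply sum_congr rfl
  intro i _
  linear_combination (A (i + 1)) * termF n i

/-- per-term identity for the odd recursion (n ≥ 1) -/
lemma termL {n : ℕ} (hn : 1 ≤ n) (i : ℕ) :
    A (i + 1) * q ^ (2 * (n - i)) * g (n + 1) (2 * i + 1) =
      q ^ 2 * (A (i + 1) * q ^ (2 * (n - 1 - i)) * g n (2 * i + 1)) +
      q ^ (3 * n + 1) * (A i * g n (2 * i)) -
      q ^ (2 * n) * (A i * g n (2 * i)) +
      q ^ (2 * n) * (1 - q ^ n) * (A i * g (n - 1) (2 * i)) := by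
  by_cases h : 2 * i ≤ n
  · have hp := pascal (n := n) (k := 2 * i) h
    have habs : q ^ (n - 2 * i) * g n (2 * i) =
        g n (2 * i) - (1 - q ^ n) * g (n - 1) (2 * i) := by
      have h3 := R3 (n - 1) (2 * i)
      rw [show n - 1 + 1 = n by omega] at h3
      linear_combination -h3
    have hA := A_succ i
    have e1 : q ^ (2 * (n - i)) = q ^ 2 * q ^ (2 * (n - 1 - i)) := by
      rw [← pow_add]; congr 1; omega
    have e2 : q ^ (2 * (n - i)) * q ^ (n - 2 * i) * q ^ (2 * i) * q ^ (2 * i + 1) =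
        q ^ (3 * n + 1) := by
      rw [← pow_add, ← pow_add, ← pow_add]; congr 1; omega
    have e3 : q ^ (2 * (n - i)) * q ^ (n - 2 * i) * q ^ (2 * i) =
        q ^ (2 * n) * q ^ (n - 2 * i) := by
      rw [← pow_add, ← pow_add, ← pow_add]; congr 1; omega
    rw [show 2 * i + 1 = 2 * i + 1 by rfl, hp, hA]
    linear_combination (A i * q ^ (2 * i) * (q ^ (2 * i + 1) - 1) * g n (2 * i + 1)) * e1 +
      (A i * g n (2 * i)) * e2 - (A i * g n (2 * i)) * e3 -
      (A i * q ^ (2 * n)) * habs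
  · rw [g_of_lt (show n < 2 * i by omega), g_of_lt (show n - 1 < 2 * i by omega),
      g_of_lt (show n < 2 * i + 1 by omega), g_of_lt (show n + 1 < 2 * i + 1 by omega)]
    simp

/-- odd recursion -/
lemma recL {n : ℕ} (hn : 1 ≤ n) :
    L (n + 1) = q ^ 2 * L n + (q ^ (3 * n + 1) - q ^ (2 * n)) * F n +
      q ^ (2 * n) * (1 - q ^ n) * F (n - 1) := by
  rw [L_ext n, ← F_prev n]
  unfold L F
  rw [show n + 1 = n + 1 by rfl]
  rw [mul_sum, mul_sum, mul_sum, ← sum_add_distrib, ← sum_add_distrib]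
  apply sum_congr rfl
  intro i _
  have := termL hn i
  rw [show n + 1 - 1 - i = n - i by omega]
  linear_combination this

lemma F_zero : F 0 = 1 := by
  unfold F
  simp [A_zero, g_zero]

lemma L_zero : L 0 = 0 := by simp [L]

lemma F_one : F 1 = 1 := by
  unfold F
  rw [show (1 : ℕ) + 1 = 2 by rfl, sum_range_succ, sum_range_succ, sum_range_zero,
    g_of_lt (show 1 < 2 * 1 by omega)]
  simp [A_zero, g_zero]

lemma g_one_one : g 1 1 = 1 := by
  rw [g_eq le_rfl]
  unfold Pnum Pden
  simp only [range_one, prod_singleton, Nat.sub_zero, pow_one, zero_add]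
  exact div_self (by simpa using one_sub_X_pow_ne (m := 1) one_ne_zero)

lemma L_one : L 1 = q - 1 := by
  unfold L
  rw [sum_range_succ, sum_range_zero, g_one_one, A_succ 0, A_zero]
  simp

lemma hchoose (n : ℕ) : (n + 1).choose 2 = n.choose 2 + n := by
  rw [Nat.choose_succ_succ n 1, Nat.choose_one_right, Nat.add_comm]

lemma main : ∀ n : ℕ, F n = q ^ (n.choose 2) ∧
    L n = q ^ (n.choose 2 + n - 1) * (q ^ n - 1) := by
  intro n
  induction n using Nat.strong_induction_on with
  | _ n ih =>
    match n with
    | 0 => simp [F_zero, L_zero]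
    | 1 =>
      refine ⟨by simpa using F_one, ?_⟩
      rw [L_one]
      norm_num
    | (n + 2) =>
      obtain ⟨hF1, hL1⟩ := ih (n + 1) (by omega)
      obtain ⟨hF0, _⟩ := ih n (by omega)
      have hcc : (n + 1).choose 2 = n.choose 2 + n := hchoose n
      have hcc2 : (n + 2).choose 2 = n.choose 2 + (2 * n + 1) := by
        rw [hchoose (n + 1), hchoose n]
        omega
      constructor
      · -- even part
        apply mul_left_cancel₀ (pow_ne_zero (n + 1) q_ne_zero)
        rw [recF (n + 1), hF1, hL1, hcc2, hcc]
        rw [show n.choose 2 + n + (n + 1) - 1 = n.choose 2 + (n + n) from by omega,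
          show n.choose 2 + (2 * n + 1) = n.choose 2 + (n + (n + 1)) from by omega]
        simp only [pow_add, pow_one]
        ring
      · -- odd part
        rw [recL (show 1 ≤ n + 1 by omega), hL1, hF1,
          show n + 1 - 1 = n from rfl, hF0, hcc, hcc2]
        rw [show n.choose 2 + n + (n + 1) - 1 = n.choose 2 + (n + n) from by omega,
          show 3 * (n + 1) + 1 = n + (n + (n + 4)) from by omega,
          show 2 * (n + 1) = n + (n + 2) from by omega,
          show n.choose 2 + (2 * n + 1) + (n + 2) - 1 = n.choose 2 + (n + (n + (n + 2)))
            from by omega]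
        simp only [pow_add, pow_one]
        ring

lemma Icc_to_range (m : ℕ) (f : ℤ → K) :
    ∑ j ∈ Icc (1 : ℤ) (m : ℤ), f j = ∑ j ∈ range m, f ((j : ℤ) + 1) := by
  induction m with
  | zero => simp
  | succ m ih =>
    have hins : Icc (1 : ℤ) ((m : ℤ) + 1) = insert ((m : ℤ) + 1) (Icc (1 : ℤ) (m : ℤ)) := by
      ext x
      simp only [mem_Icc, mem_insert]
      omega
    rw [show ((m + 1 : ℕ) : ℤ) = (m : ℤ) + 1 by push_cast; ring, hins,
      sum_insert (by simp), ih, sum_range_succ]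
    ring

lemma gauss_eq (n k : ℕ) : gauss q (n : ℤ) (k : ℤ) = g n k := by
  by_cases h : k ≤ n
  · rw [g_eq h]
    unfold gauss Pnum Pden
    rw [if_pos ⟨Int.ofNat_nonneg k, by exact_mod_cast h⟩]
    rw [Int.toNat_natCast, ← prod_div_distrib]
    apply prod_congr rfl
    intro i hi
    have hi' : i < k := mem_range.mp hi
    have e1 : q ^ ((n : ℤ) - (i : ℤ)) = q ^ (n - i) := by
      rw [show (n : ℤ) - (i : ℤ) = ((n - i : ℕ) : ℤ) by omega, zpow_natCast]
    have e2 : q ^ ((i : ℤ) + 1) = q ^ (i + 1) := by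
      rw [show (i : ℤ) + 1 = ((i + 1 : ℕ) : ℤ) by omega, zpow_natCast]
    rw [e1, e2]
  · rw [g_of_lt (by omega)]
    unfold gauss
    rw [if_neg]
    omega

lemma Icc_to_range_prod (m : ℕ) (f : ℤ → K) :
    ∏ j ∈ Icc (1 : ℤ) (m : ℤ), f j = ∏ j ∈ range m, f ((j : ℤ) + 1) := by
  induction m with
  | zero => simp
  | succ m ih =>
    have hins : Icc (1 : ℤ) ((m : ℤ) + 1) = insert ((m : ℤ) + 1) (Icc (1 : ℤ) (m : ℤ)) := by
      ext x
      simp only [mem_Icc, mem_insert]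
      omega
    rw [show ((m + 1 : ℕ) : ℤ) = (m : ℤ) + 1 by push_cast; ring, hins,
      prod_insert (by simp), ih, prod_range_succ]
    ring

lemma e_eq (i : ℕ) : e ((i : ℤ) + 1) = A (i + 1) / (q - 1) := by
  unfold e A
  congr 1
  have e1 : q ^ (((i : ℤ) + 1) * ((i : ℤ) + 1 - 1)) = q ^ ((i + 1) * (i + 1 - 1)) := by
    rw [show ((i : ℤ) + 1) * ((i : ℤ) + 1 - 1) = (((i + 1) * (i + 1 - 1) : ℕ) : ℤ) by
      push_cast; ring, zpow_natCast]
  rw [e1]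
  congr 1
  rw [show ((i : ℤ) + 1) = ((i + 1 : ℕ) : ℤ) by push_cast; ring,
    Icc_to_range_prod (i + 1) (fun j => q ^ (2 * j - 1) - 1)]
  apply prod_congr rfl
  intro j _
  congr 1
  rw [show 2 * ((j : ℤ) + 1) - 1 = ((2 * j + 1 : ℕ) : ℤ) by push_cast; ring, zpow_natCast]

theorem stmt1 (r : ℤ) (hr : 1 ≤ r) :
    ∑ i ∈ Finset.Icc (1 : ℤ) r, e i * gauss q (2 * r) (2 * i) =
      (q ^ (r * (2 * r - 1)) - 1) / (q - 1) := by
  lift r to ℕ using (by omega) with m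
  have hm : 1 ≤ m := by exact_mod_cast hr
  rw [Icc_to_range m (fun i => e i * gauss q (2 * (m : ℤ)) (2 * i))]
  have hterm : ∀ j : ℕ, e ((j : ℤ) + 1) * gauss q (2 * (m : ℤ)) (2 * ((j : ℤ) + 1)) =
      A (j + 1) * g (2 * m) (2 * (j + 1)) / (q - 1) := by
    intro j
    rw [e_eq j,
      show (2 * (m : ℤ)) = ((2 * m : ℕ) : ℤ) by push_cast; ring,
      show (2 * ((j : ℤ) + 1)) = ((2 * (j + 1) : ℕ) : ℤ) by push_cast; ring,
      gauss_eq (2 * m) (2 * (j + 1))]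
    ring
  rw [sum_congr rfl fun j _ => hterm j, ← sum_div]
  have hsum : ∑ j ∈ range m, A (j + 1) * g (2 * m) (2 * (j + 1)) =
      ∑ j ∈ range (2 * m + 1), A (j + 1) * g (2 * m) (2 * (j + 1)) := by
    apply sum_subset (by intro x hx; simp at *; omega)
    intro x _ hx
    rw [g_of_lt (show 2 * m < 2 * (x + 1) by simp at hx; omega), mul_zero]
  have hF := (main (2 * m)).1
  rw [F_split (2 * m)] at hF
  have hnum : ∑ j ∈ range m, A (j + 1) * g (2 * m) (2 * (j + 1)) =
      q ^ ((2 * m).choose 2) - 1 := by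
    rw [hsum]
    linear_combination hF
  rw [hnum]
  have hch : (2 * m).choose 2 = m * (2 * m - 1) := by
    rw [Nat.choose_two_right]
    have h2 : 2 * m * (2 * m - 1) = 2 * (m * (2 * m - 1)) := by
      cases m with
      | zero => rfl
      | succ k => rw [show 2 * (k + 1) - 1 = 2 * k + 1 by omega]; ring
    rw [h2, Nat.mul_div_cancel_left _ (by norm_num)]
  have hexp : q ^ ((m : ℤ) * (2 * (m : ℤ) - 1)) = q ^ (m * (2 * m - 1)) := by
    rw [show (m : ℤ) * (2 * (m : ℤ) - 1) = ((m * (2 * m - 1) : ℕ) : ℤ) by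
      push_cast [Nat.cast_sub (show 1 ≤ 2 * m by omega)]; ring, zpow_natCast]
  rw [hexp, hch]
end

section
/- Let F be a finite field with q elements, let n ≥ 3 be an odd integer, let V = F^n, let k be an integer with 0 ≤ k ≤ (n-1)/2, and let w be an alternating bilinear form on V whose radical has dimension 2k+1. Then the number of 2-dimensional F-subspaces T ⊆ V with w(t, t') = 0 for all t, t' ∈ T equals, as a rational number, ((q^{2k} - 1)/(q² - 1)) · q^{n-1} + (1/(q+1)) · ((q^{n-1} - 1)/(q - 1))². -/
open Finset Module Submodule

section Helpers
variable {F : Type*} [Field F] [Fintype F] {V : Type*} [AddCommGroup V] [Module F V]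
  [Fintype V] [DecidableEq V]

lemma card_mem_submodule (W : Submodule F V) [DecidablePred (· ∈ W)] :
    (univ.filter (· ∈ W)).card = Fintype.card F ^ finrank F W := by
  rw [← Fintype.card_subtype]
  exact card_eq_pow_finrank

lemma card_diff_submodule (A B : Submodule F V) [DecidablePred (· ∈ A)] [DecidablePred (· ∈ B)]
    (h : A ≤ B) :
    (univ.filter fun v => v ∈ B ∧ v ∉ A).card
      = Fintype.card F ^ finrank F B - Fintype.card F ^ finrank F A := by
  have : (univ.filter fun v => v ∈ B ∧ v ∉ A) = univ.filter (· ∈ B) \ univ.filter (· ∈ A) := by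
    ext v; simp [and_comm]
  rw [this, card_sdiff_of_subset (by intro v; simp; exact @h v), card_mem_submodule, card_mem_submodule]

lemma pair_count (p : V → Prop) (r : V → V → Prop) [DecidablePred p]
    [∀ u, DecidablePred (r u)] :
    (univ.filter fun z : V × V => p z.1 ∧ r z.1 z.2).card
      = ∑ u ∈ univ.filter p, (univ.filter (r u)).card := by
  rw [card_eq_sum_card_fiberwise (f := Prod.fst) (t := univ.filter p)
    (by intro z hz; simp at hz ⊢; exact hz.1)]
  refine Finset.sum_congr rfl fun u hu => ?_
  simp only [mem_filter, mem_univ, true_and] at hu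
  apply Finset.card_nbij' (fun z => z.2) (fun v => (u, v))
  · intro z hz; simp at hz ⊢; rw [← hz.2]; exact hz.1.2
  · intro v hv; simp at hv ⊢; exact ⟨hu, hv⟩
  · intro z hz; simp only [mem_coe, mem_filter] at hz
    exact Prod.ext hz.2.symm rfl
  · intro v hv; rfl

end Helpers


lemma final_arith (q : ℕ) (hq2 : 2 ≤ q) (n k : ℕ) (hn : 3 ≤ n) (h2k1 : 2*k+1 ≤ n) (N : ℕ)
    (hnat : N * ((q^2 - 1) * (q^2 - q))
      = (q^(2*k+1) - 1) * (q^n - q) + (q^n - q^(2*k+1)) * (q^(n-1) - q)) :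
    (N : ℚ) = ((q:ℚ)^(2*k) - 1) / ((q:ℚ)^2 - 1) * (q:ℚ)^(n-1)
      + 1/((q:ℚ)+1) * (((q:ℚ)^(n-1) - 1)/((q:ℚ)-1))^2 := by
  have h1 : (1:ℕ) ≤ q ^ (2*k+1) := Nat.one_le_pow _ _ (by omega)
  have h2 : q ≤ q ^ n := Nat.le_self_pow (by omega) q
  have h3 : q ^ (2*k+1) ≤ q ^ n := Nat.pow_le_pow_right (show 0 < q by omega) h2k1
  have h4 : q ≤ q ^ (n-1) := Nat.le_self_pow (by omega) q
  have h5 : q ≤ q ^ 2 := Nat.le_self_pow (by omega) q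
  have h6 : (1:ℕ) ≤ q ^ 2 := Nat.one_le_pow _ _ (by omega)
  qify [h1, h2, h3, h4, h5, h6] at hnat
  set Q : ℚ := (q : ℚ) with hQdef
  have hQ2 : (2:ℚ) ≤ Q := by rw [hQdef]; exact_mod_cast hq2
  have hQ0 : Q ≠ 0 := by nlinarith
  have hA : Q^2 - 1 ≠ 0 := by nlinarith
  have hB : Q^2 - Q ≠ 0 := by nlinarith
  have hC : Q - 1 ≠ 0 := by nlinarith
  have hD2 : Q + 1 ≠ 0 := by nlinarith
  have hQn : Q ^ n = Q ^ (n-1) * Q := by rw [← pow_succ]; congr 1; omega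
  have hQk : Q ^ (2*k+1) = Q ^ (2*k) * Q := pow_succ _ _
  rw [hQn, hQk] at hnat
  have hDne : ((Q^2 - 1) * (Q^2 - Q)) ≠ 0 := mul_ne_zero hA hB
  have hval2 : (N : ℚ)
      = ((Q^(2*k)*Q - 1) * (Q^(n-1)*Q - Q) + (Q^(n-1)*Q - Q^(2*k)*Q) * (Q^(n-1) - Q))
        / ((Q^2 - 1) * (Q^2 - Q)) := by
    rw [eq_div_iff hDne]; exact hnat
  rw [hval2]
  field_simp
  ring

theorem stmt5 (F : Type*) [Field F] [Fintype F] (n k : ℕ) (hn : 3 ≤ n) (hodd : Odd n)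
    (hk : k ≤ (n - 1) / 2)
    (w : (Fin n → F) →ₗ[F] (Fin n → F) →ₗ[F] F)
    (halt : ∀ v, w v v = 0)
    (hrad : Module.finrank F (LinearMap.ker w) = 2 * k + 1) :
    (Nat.card {T : Submodule F (Fin n → F) //
        Module.finrank F T = 2 ∧ ∀ t ∈ T, ∀ t' ∈ T, w t t' = 0} : ℚ) =
      (((Fintype.card F : ℚ) ^ (2 * k) - 1) / ((Fintype.card F : ℚ) ^ 2 - 1)) *
          (Fintype.card F : ℚ) ^ (n - 1) +
        (1 / ((Fintype.card F : ℚ) + 1)) *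
          (((Fintype.card F : ℚ) ^ (n - 1) - 1) / ((Fintype.card F : ℚ) - 1)) ^ 2 := by
  classical
  set q := Fintype.card F with hq
  have hq2 : 2 ≤ q := Fintype.one_lt_card
  set Vt := Fin n → F with hVt
  have hdim : finrank F Vt = n := by
    exact Module.finrank_fin_fun F
  have hcardV : Fintype.card Vt = q ^ n := by
    rw [card_eq_pow_finrank (K := F), hdim]
  have h2k1 : 2 * k + 1 ≤ n := by
    obtain ⟨m, rfl⟩ := hodd
    omega
  -- skew symmetry
  have hskew : ∀ u v : Vt, w u v = 0 → w v u = 0 := by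
    intro u v h
    have h2 := halt (u + v)
    simp only [map_add, LinearMap.add_apply, halt, h] at h2
    simpa using h2
  -- isotropy of spans of pairs
  have hspan_iso : ∀ u v : Vt, w u v = 0 →
      ∀ x ∈ span F ({u, v} : Set Vt), ∀ y ∈ span F ({u, v} : Set Vt), w x y = 0 := by
    intro u v huv x hx y hy
    obtain ⟨a, b, rfl⟩ := mem_span_pair.1 hx
    obtain ⟨c, d, rfl⟩ := mem_span_pair.1 hy
    simp [map_add, map_smul, halt, huv, hskew u v huv]
  -- rank 2 of spans of suitable pairs
  have hrank2 : ∀ u v : Vt, u ≠ 0 → v ∉ span F ({u} : Set Vt) →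
      finrank F (span F ({u, v} : Set Vt)) = 2 := by
    intro u v hu hv
    have hli : LinearIndependent F ![v, u] := by
      rw [linearIndependent_fin2]
      refine ⟨hu, fun a h => hv ?_⟩
      show v ∈ span F ({u} : Set Vt)
      rw [mem_span_singleton]
      exact ⟨a, h⟩
    have hr := finrank_span_eq_card hli
    have hrange : Set.range ![v, u] = {u, v} := by
      ext x
      simp [Fin.exists_fin_two, or_comm]
    rw [hrange] at hr
    simpa using hr
  have hfin : Finite (Submodule F Vt) :=
    Finite.of_injective (fun T : Submodule F Vt => (T : Set Vt)) SetLike.coe_injective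
  cases nonempty_fintype (Submodule F Vt)
  set t : Finset (Submodule F Vt) :=
    univ.filter (fun T => finrank F T = 2 ∧ ∀ x ∈ T, ∀ y ∈ T, w x y = 0) with ht
  have hT : Nat.card {T : Submodule F Vt //
      finrank F T = 2 ∧ ∀ x ∈ T, ∀ y ∈ T, w x y = 0} = t.card := by
    rw [Nat.card_eq_fintype_card, Fintype.card_subtype]
  set s : Finset (Vt × Vt) :=
    univ.filter (fun z => z.1 ≠ 0 ∧ (z.2 ∉ span F ({z.1} : Set Vt) ∧ w z.1 z.2 = 0)) with hs
  have hker : (univ.filter (· ∈ LinearMap.ker w)).card = q ^ (2*k+1) := by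
    rw [card_mem_submodule, hrad]
  have hval : ∀ u : Vt, u ≠ 0 →
      (univ.filter (fun v => v ∉ span F ({u} : Set Vt) ∧ w u v = 0)).card
        = (if u ∈ LinearMap.ker w then q ^ n else q ^ (n-1)) - q := by
    intro u hu
    have hle : span F ({u} : Set Vt) ≤ LinearMap.ker (w u) := by
      rw [span_le, Set.singleton_subset_iff]
      exact LinearMap.mem_ker.2 (halt u)
    have heq : (univ.filter (fun v => v ∉ span F ({u} : Set Vt) ∧ w u v = 0))
        = univ.filter (fun v => v ∈ LinearMap.ker (w u) ∧ v ∉ span F ({u} : Set Vt)) := by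
      ext v; simp [LinearMap.mem_ker, and_comm]
    rw [heq, card_diff_submodule _ _ hle, finrank_span_singleton hu, pow_one]
    congr 1
    by_cases hmem : u ∈ LinearMap.ker w
    · rw [if_pos hmem, LinearMap.mem_ker.1 hmem, LinearMap.ker_zero, finrank_top, hdim]
    · rw [if_neg hmem]
      have hne : w u ≠ 0 := fun h => hmem (LinearMap.mem_ker.2 h)
      obtain ⟨x, hx⟩ : ∃ x, w u x ≠ 0 := by
        by_contra hc; push_neg at hc
        exact hne (LinearMap.ext hc)
      have hsurj : Function.Surjective (w u) := by
        intro c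
        refine ⟨(c / w u x) • x, ?_⟩
        rw [map_smul, smul_eq_mul, div_mul_cancel₀ _ hx]
      have hrange : finrank F (LinearMap.range (w u)) = 1 := by
        rw [LinearMap.range_eq_top.2 hsurj, finrank_top, finrank_self]
      have h3 := LinearMap.finrank_range_add_finrank_ker (w u)
      rw [hrange, hdim] at h3
      have h4 : finrank F (LinearMap.ker (w u)) = n - 1 := by omega
      rw [h4]
  have hsc : s.card
      = (q ^ (2*k+1) - 1) * (q ^ n - q) + (q ^ n - q ^ (2*k+1)) * (q ^ (n-1) - q) := by
    rw [hs, pair_count (fun u : Vt => u ≠ 0)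
      (fun u v => v ∉ span F ({u} : Set Vt) ∧ w u v = 0)]
    rw [Finset.sum_congr rfl (fun u hu => hval u (by simpa using hu))]
    rw [← Finset.sum_filter_add_sum_filter_not (univ.filter (· ≠ (0:Vt)))
      (· ∈ LinearMap.ker w)]
    have e1 : (univ.filter (· ≠ (0:Vt))).filter (· ∈ LinearMap.ker w)
        = (univ.filter (· ∈ LinearMap.ker w)).erase 0 := by
      ext v; simp [and_comm]
    have e2 : (univ.filter (· ≠ (0:Vt))).filter (· ∉ LinearMap.ker w)
        = univ \ univ.filter (· ∈ LinearMap.ker w) := by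
      ext v
      simp only [mem_filter, mem_univ, mem_sdiff, true_and]
      constructor
      · rintro ⟨_, h⟩; exact h
      · intro h; exact ⟨fun h0 => h (h0 ▸ (LinearMap.ker w).zero_mem), h⟩
    rw [Finset.sum_congr e1 (fun u hu => by
        rw [if_pos (by simp at hu; exact hu.2)]),
      Finset.sum_congr e2 (fun u hu => by
        rw [if_neg (by simp at hu; exact hu)])]
    rw [Finset.sum_const, Finset.sum_const, card_erase_of_mem (by simp), hker,
      card_sdiff_of_subset (subset_univ _), card_univ, hcardV, hker, smul_eq_mul, smul_eq_mul]
  have hfiber : ∀ T ∈ t, (s.filter (fun z => span F ({z.1, z.2} : Set Vt) = T)).card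
      = (q^2 - 1) * (q^2 - q) := by
    intro T hTmem
    rw [ht, mem_filter] at hTmem
    obtain ⟨-, hTr, hTiso⟩ := hTmem
    have heq : s.filter (fun z => span F ({z.1, z.2} : Set Vt) = T)
        = univ.filter (fun z : Vt × Vt =>
            (z.1 ∈ T ∧ z.1 ≠ 0) ∧ (z.2 ∈ T ∧ z.2 ∉ span F ({z.1} : Set Vt))) := by
      ext z
      simp only [hs, filter_filter, mem_filter, mem_univ, true_and]
      constructor
      · rintro ⟨⟨h1, h2, h3⟩, hsp⟩
        refine ⟨⟨?_, h1⟩, ?_, h2⟩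
        · rw [← hsp]; exact subset_span (by simp)
        · rw [← hsp]; exact subset_span (by simp)
      · rintro ⟨⟨h1, h1'⟩, h2, h2'⟩
        have hw : w z.1 z.2 = 0 := hTiso _ h1 _ h2
        refine ⟨⟨h1', h2', hw⟩, ?_⟩
        apply Submodule.eq_of_le_of_finrank_le
        · rw [span_le, Set.insert_subset_iff, Set.singleton_subset_iff]
          exact ⟨h1, h2⟩
        · rw [hrank2 _ _ h1' h2', hTr]
    rw [heq, pair_count (fun u : Vt => u ∈ T ∧ u ≠ 0)
      (fun u v => v ∈ T ∧ v ∉ span F ({u} : Set Vt))]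
    have hterm : ∀ u ∈ univ.filter (fun u : Vt => u ∈ T ∧ u ≠ 0),
        (univ.filter (fun v => v ∈ T ∧ v ∉ span F ({u} : Set Vt))).card = q^2 - q := by
      intro u hu
      simp only [mem_filter, mem_univ, true_and] at hu
      have hle : span F ({u} : Set Vt) ≤ T := by
        rw [span_le, Set.singleton_subset_iff]; exact hu.1
      rw [card_diff_submodule _ _ hle, finrank_span_singleton hu.2, pow_one, hTr]
    rw [Finset.sum_congr rfl hterm, Finset.sum_const, smul_eq_mul]
    congr 1
    have e3 : univ.filter (fun u : Vt => u ∈ T ∧ u ≠ 0) = (univ.filter (· ∈ T)).erase 0 := by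
      ext v; simp [and_comm]
    rw [e3, card_erase_of_mem (by simp [T.zero_mem]), card_mem_submodule, hTr]
  have hmaps : ∀ z ∈ s, span F ({z.1, z.2} : Set Vt) ∈ t := by
    intro z hz
    rw [hs, mem_filter] at hz
    obtain ⟨-, h1, h2, h3⟩ := hz
    rw [ht, mem_filter]
    exact ⟨mem_univ _, hrank2 _ _ h1 h2, hspan_iso _ _ h3⟩
  have hmain : s.card = t.card * ((q^2 - 1) * (q^2 - q)) := by
    rw [card_eq_sum_card_fiberwise hmaps, Finset.sum_congr rfl hfiber,
      Finset.sum_const, smul_eq_mul]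
  have hnat : t.card * ((q^2 - 1) * (q^2 - q))
      = (q^(2*k+1) - 1) * (q^n - q) + (q^n - q^(2*k+1)) * (q^(n-1) - q) := by
    rw [← hmain, hsc]
  rw [hT]
  exact final_arith q hq2 n k hn h2k1 t.card hnat
end

section
/- Let F be a finite field with q elements, let n ≥ 4 be an even integer, let V = F^n, let k be an integer with 0 ≤ k < n/2, and let w be an alternating bilinear form on V whose radical has dimension 2k. Then the number of 2-dimensional F-subspaces T ⊆ V with w(t, t') = 0 for all t, t' ∈ T equals, as a rational number, ((q^{2k} - 1)/(q² - 1)) · q^{n-2} + ((q^{n-2} - 1)(q^n - 1))/((q - 1)²(q + 1)). -/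
open Finset Module Submodule

lemma pair_count_s7 {α : Type*} [Fintype α] [DecidableEq α] (pa : α → Prop) (pb : α → α → Prop)
    [DecidablePred pa] [∀ a, DecidablePred (pb a)] (c : ℕ)
    (h : ∀ a, pa a → (univ.filter (pb a)).card = c) :
    (univ.filter (fun p : α × α => pa p.1 ∧ pb p.1 p.2)).card
      = (univ.filter pa).card * c := by
  rw [Finset.card_eq_sum_card_fiberwise (f := Prod.fst) (t := univ.filter pa)
    (fun p hp => by simp only [coe_filter, mem_univ, true_and, Set.mem_setOf_eq] at hp ⊢; exact hp.1)]
  rw [Finset.sum_congr rfl (fun a ha => ?_), Finset.sum_const, smul_eq_mul]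
  simp only [mem_filter, mem_univ, true_and] at ha
  rw [← h a ha]
  apply Finset.card_bij (fun p _ => p.2)
  · intro p hp
    simp only [mem_filter, mem_univ, true_and] at hp ⊢
    rcases hp with ⟨⟨_, h2⟩, h3⟩
    rwa [h3] at h2
  · intro p hp p' hp' hpp
    simp only [mem_filter] at hp hp'
    exact Prod.ext (hp.2.trans hp'.2.symm) hpp
  · intro v hv
    simp only [mem_filter, mem_univ, true_and] at hv
    exact ⟨(a, v), by simp [ha, hv], rfl⟩

set_option maxHeartbeats 2000000 in
theorem stmt7 (F : Type*) [Field F] [Fintype F] (n k : ℕ) (hn : 4 ≤ n) (heven : Even n)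
    (hk : k < n / 2)
    (w : (Fin n → F) →ₗ[F] (Fin n → F) →ₗ[F] F)
    (halt : ∀ v, w v v = 0)
    (hrad : Module.finrank F (LinearMap.ker w) = 2 * k) :
    (Nat.card {T : Submodule F (Fin n → F) //
        Module.finrank F T = 2 ∧ ∀ t ∈ T, ∀ t' ∈ T, w t t' = 0} : ℚ) =
      (((Fintype.card F : ℚ) ^ (2 * k) - 1) / ((Fintype.card F : ℚ) ^ 2 - 1)) *
          (Fintype.card F : ℚ) ^ (n - 2) +
        (((Fintype.card F : ℚ) ^ (n - 2) - 1) * ((Fintype.card F : ℚ) ^ n - 1)) /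
          (((Fintype.card F : ℚ) - 1) ^ 2 * ((Fintype.card F : ℚ) + 1)) := by
  classical
  set q := Fintype.card F with hqdef
  have hq2 : 2 ≤ q := Fintype.one_lt_card
  have hfr : finrank F (Fin n → F) = n := Module.finrank_fin_fun F
  have hkn : 2 * k + 2 ≤ n := by
    obtain ⟨m, hm⟩ := heven; omega
  -- skew symmetry
  have hskew : ∀ u v, w v u = - w u v := by
    intro u v
    have h := halt (u + v)
    simp only [map_add, LinearMap.add_apply, halt u, halt v] at h
    rw [zero_add, add_zero] at h
    exact (neg_eq_of_add_eq_zero_left h).symm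
  -- isotropy of spans of w-orthogonal pairs
  have hspan_iso : ∀ u v : (Fin n → F), w u v = 0 →
      ∀ t ∈ span F {u, v}, ∀ t' ∈ span F {u, v}, w t t' = 0 := by
    intro u v h0 t ht t' ht'
    have h1 : ∀ x ∈ ({u, v} : Set (Fin n → F)), ∀ y ∈ ({u, v} : Set (Fin n → F)), w x y = 0 := by
      rintro x (rfl | rfl) y (rfl | rfl)
      · exact halt _
      · exact h0
      · rw [hskew, h0, neg_zero]
      · exact halt _
    have h2 : ∀ x ∈ ({u, v} : Set (Fin n → F)), w x t' = 0 := by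
      intro x hx
      refine Submodule.span_induction (fun y hy => h1 x hx y hy) (map_zero _) ?_ ?_ ht'
      · intro a b _ _ ha hb; rw [map_add, ha, hb, add_zero]
      · intro c a _ ha; rw [map_smul, ha, smul_zero]
    refine Submodule.span_induction (p := fun x _ => w x t' = 0) (fun y hy => h2 y hy) ?_ ?_ ?_ ht
    · simp
    · intro a b _ _ ha hb; simp [ha, hb]
    · intro c a _ ha; simp [ha]
  -- cardinality of submodules
  have hmem : ∀ S : Submodule F (Fin n → F),
      (univ.filter (· ∈ S)).card = q ^ finrank F S := by
    intro S
    rw [← Fintype.card_subtype]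
    exact card_eq_pow_finrank (K := F) (V := {x // x ∈ S})
  have hdiff : ∀ A B : Submodule F (Fin n → F), A ≤ B →
      (univ.filter (fun v => v ∉ A ∧ v ∈ B)).card = q ^ finrank F B - q ^ finrank F A := by
    intro A B hAB
    have he : (univ.filter (fun v => v ∉ A ∧ v ∈ B))
        = univ.filter (· ∈ B) \ univ.filter (· ∈ A) := by
      ext v
      simp only [mem_filter, mem_univ, true_and, Finset.mem_sdiff]
      tauto
    rw [he, Finset.card_sdiff_of_subset, hmem, hmem]
    intro v hv
    simp only [mem_filter, mem_univ, true_and] at hv ⊢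
    exact hAB hv
  have hne0 : ∀ S : Submodule F (Fin n → F),
      (univ.filter (fun u => u ≠ 0 ∧ u ∈ S)).card = q ^ finrank F S - 1 := by
    intro S
    have he : (univ.filter (fun u => u ≠ 0 ∧ u ∈ S))
        = (univ.filter (· ∈ S)).erase 0 := by
      ext u
      simp only [mem_filter, mem_univ, true_and, Finset.mem_erase]
    rw [he, Finset.card_erase_of_mem (by simp [Submodule.zero_mem]), hmem]
  -- rank of span of a "free" pair
  have hrank2 : ∀ u v : Fin n → F, u ≠ 0 → v ∉ span F {u} →
      finrank F (span F ({u, v} : Set (Fin n → F))) = 2 := by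
    intro u v hu hv
    have hvu : v ∉ ({u} : Set (Fin n → F)) := by
      simp only [Set.mem_singleton_iff]
      rintro rfl
      exact hv (Submodule.mem_span_singleton_self v)
    have hli : LinearIndependent F (fun b : ({v, u} : Set (Fin n → F)) => (b : Fin n → F)) := by
      show LinearIndepOn F id _
      rw [linearIndepOn_id_insert hvu]
      exact ⟨(linearIndepOn_singleton_iff F).mpr hu, hv⟩
    have := finrank_span_set_eq_card (s := ({v, u} : Set (Fin n → F))) hli
    rw [Set.pair_comm u v, this, Set.toFinset_insert, Set.toFinset_singleton,
      Finset.card_insert_of_notMem (by simpa using hvu), Finset.card_singleton]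
  -- kernels of w u
  have hkertop : ∀ u : Fin n → F, u ∈ LinearMap.ker w →
      finrank F (LinearMap.ker (w u)) = n := by
    intro u hu
    have : w u = 0 := LinearMap.mem_ker.mp hu
    rw [this, LinearMap.ker_zero, finrank_top, hfr]
  have hker1 : ∀ u : Fin n → F, u ∉ LinearMap.ker w →
      finrank F (LinearMap.ker (w u)) = n - 1 := by
    intro u hu
    have hne : w u ≠ 0 := by simpa [LinearMap.mem_ker] using hu
    have hr : finrank F (LinearMap.range (w u)) = 1 := by
      have hle : finrank F (LinearMap.range (w u)) ≤ 1 := by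
        simpa using Submodule.finrank_le (LinearMap.range (w u))
      have hpos : 0 < finrank F (LinearMap.range (w u)) := by
        rw [finrank_pos_iff]
        rw [Submodule.nontrivial_iff_ne_bot, Ne, LinearMap.range_eq_bot]
        exact hne
      omega
    have hrn := LinearMap.finrank_range_add_finrank_ker (w u)
    rw [hfr, hr] at hrn
    omega
  have hspanle : ∀ u : Fin n → F, span F {u} ≤ LinearMap.ker (w u) := by
    intro u
    rw [Submodule.span_le, Set.singleton_subset_iff]
    exact LinearMap.mem_ker.mpr (halt u)
  -- the pair set
  set P : Finset ((Fin n → F) × (Fin n → F)) :=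
    univ.filter (fun p => p.1 ≠ 0 ∧ p.2 ∉ span F {p.1} ∧ w p.1 p.2 = 0) with hPdef
  -- first count : fiberwise over the first coordinate
  have hP1 : (P.filter (fun p => p.1 ∈ LinearMap.ker w)).card
      = (q ^ (2 * k) - 1) * (q ^ n - q) := by
    have he : P.filter (fun p => p.1 ∈ LinearMap.ker w)
        = univ.filter (fun p : (Fin n → F) × (Fin n → F) =>
            (p.1 ≠ 0 ∧ p.1 ∈ LinearMap.ker w) ∧ (p.2 ∉ span F {p.1} ∧ w p.1 p.2 = 0)) := by
      ext p
      simp only [hPdef, Finset.filter_filter, mem_filter, mem_univ, true_and]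
      tauto
    have hcount : ∀ u : Fin n → F, (u ≠ 0 ∧ u ∈ LinearMap.ker w) →
        (univ.filter (fun v => v ∉ span F {u} ∧ w u v = 0)).card = q ^ n - q := by
      intro u hu
      have hwu : w u = 0 := LinearMap.mem_ker.mp hu.2
      have he2 : (univ.filter (fun v => v ∉ span F {u} ∧ w u v = 0))
          = univ.filter (fun v => v ∉ span F {u} ∧ v ∈ (⊤ : Submodule F (Fin n → F))) := by
        ext v
        simp [hwu]
      rw [he2, hdiff _ _ le_top, finrank_top, hfr, finrank_span_singleton hu.1, pow_one]
    have hc := pair_count_s7 (fun u : Fin n → F => u ≠ 0 ∧ u ∈ LinearMap.ker w)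
      (fun u v => v ∉ span F {u} ∧ w u v = 0) (q ^ n - q) hcount
    rw [hne0, hrad] at hc
    rw [he]
    exact hc
  have hP2 : (P.filter (fun p => p.1 ∉ LinearMap.ker w)).card
      = (q ^ n - q ^ (2 * k)) * (q ^ (n - 1) - q) := by
    have he : P.filter (fun p => p.1 ∉ LinearMap.ker w)
        = univ.filter (fun p : (Fin n → F) × (Fin n → F) =>
            (p.1 ∉ LinearMap.ker w) ∧ (p.2 ∉ span F {p.1} ∧ w p.1 p.2 = 0)) := by
      ext p
      simp only [hPdef, Finset.filter_filter, mem_filter, mem_univ, true_and]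
      constructor
      · tauto
      · intro h
        refine ⟨⟨fun h0 => h.1 (h0 ▸ Submodule.zero_mem _), h.2.1, h.2.2⟩, h.1⟩
    have hcount : ∀ u : Fin n → F, u ∉ LinearMap.ker w →
        (univ.filter (fun v => v ∉ span F {u} ∧ w u v = 0)).card = q ^ (n - 1) - q := by
      intro u hu
      have he2 : (univ.filter (fun v => v ∉ span F {u} ∧ w u v = 0))
          = univ.filter (fun v => v ∉ span F {u} ∧ v ∈ LinearMap.ker (w u)) := by
        ext v
        simp [LinearMap.mem_ker]
      have hu0 : u ≠ 0 := fun h0 => hu (h0 ▸ Submodule.zero_mem _)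
      rw [he2, hdiff _ _ (hspanle u), hker1 u hu, finrank_span_singleton hu0, pow_one]
    have hc := pair_count_s7 (fun u : Fin n → F => u ∉ LinearMap.ker w)
      (fun u v => v ∉ span F {u} ∧ w u v = 0) (q ^ (n - 1) - q) hcount
    have hcard_not : (univ.filter (fun u : Fin n → F => u ∉ LinearMap.ker w)).card
        = q ^ n - q ^ (2 * k) := by
      have he3 : (univ.filter (fun u : Fin n → F => u ∉ LinearMap.ker w))
          = univ \ univ.filter (fun u : Fin n → F => u ∈ LinearMap.ker w) := by
        rw [Finset.filter_not]
      rw [he3, Finset.card_sdiff_of_subset (Finset.filter_subset _ _), hmem, hrad]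
      congr 1
      rw [Finset.card_univ, hqdef, card_eq_pow_finrank (K := F) (V := Fin n → F), hfr]
    rw [hcard_not] at hc
    rw [he]
    exact hc
  have hPcard1 : P.card = (q ^ (2 * k) - 1) * (q ^ n - q)
      + (q ^ n - q ^ (2 * k)) * (q ^ (n - 1) - q) := by
    rw [← Finset.card_filter_add_card_filter_not (s := P)
      (p := fun p => p.1 ∈ LinearMap.ker w), hP1, hP2]
  -- the set of isotropic planes
  set Pl : Finset (Submodule F (Fin n → F)) :=
    univ.filter (fun T => finrank F T = 2 ∧ ∀ t ∈ T, ∀ t' ∈ T, w t t' = 0) with hPldef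
  have hmaps : ∀ p ∈ P, span F ({p.1, p.2} : Set (Fin n → F)) ∈ Pl := by
    intro p hp
    simp only [hPdef, mem_filter, mem_univ, true_and] at hp
    obtain ⟨h1, h2, h3⟩ := hp
    simp only [hPldef, mem_filter, mem_univ, true_and]
    exact ⟨hrank2 _ _ h1 h2, hspan_iso _ _ h3⟩
  have hfiber : ∀ T ∈ Pl,
      (P.filter (fun p => span F ({p.1, p.2} : Set (Fin n → F)) = T)).card
        = (q ^ 2 - 1) * (q ^ 2 - q) := by
    intro T hT
    simp only [hPldef, mem_filter, mem_univ, true_and] at hT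
    obtain ⟨hT2, hTiso⟩ := hT
    have he : P.filter (fun p => span F ({p.1, p.2} : Set (Fin n → F)) = T)
        = univ.filter (fun p : (Fin n → F) × (Fin n → F) =>
            (p.1 ≠ 0 ∧ p.1 ∈ T) ∧ (p.2 ∉ span F {p.1} ∧ p.2 ∈ T)) := by
      ext p
      simp only [hPdef, Finset.filter_filter, mem_filter, mem_univ, true_and]
      constructor
      · rintro ⟨⟨h1, h2, h3⟩, h4⟩
        refine ⟨⟨h1, ?_⟩, h2, ?_⟩
        · rw [← h4]
          exact Submodule.subset_span (by simp)
        · rw [← h4]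
          exact Submodule.subset_span (by simp)
      · rintro ⟨⟨h1, h2⟩, h3, h4⟩
        refine ⟨⟨h1, h3, hTiso _ h2 _ h4⟩, ?_⟩
        apply Submodule.eq_of_le_of_finrank_eq
        · rw [Submodule.span_le]
          rintro x (rfl | rfl)
          · exact h2
          · exact h4
        · rw [hrank2 _ _ h1 h3, hT2]
    have hcount : ∀ u : Fin n → F, (u ≠ 0 ∧ u ∈ T) →
        (univ.filter (fun v => v ∉ span F {u} ∧ v ∈ T)).card = q ^ 2 - q := by
      intro u hu
      have hle : span F {u} ≤ T := by
        rw [Submodule.span_le, Set.singleton_subset_iff]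
        exact hu.2
      rw [hdiff _ _ hle, hT2, finrank_span_singleton hu.1, pow_one]
    have hc := pair_count_s7 (fun u : Fin n → F => u ≠ 0 ∧ u ∈ T)
      (fun u v => v ∉ span F {u} ∧ v ∈ T) (q ^ 2 - q) hcount
    rw [hne0, hT2] at hc
    rw [he]
    exact hc
  have hPcard2 : P.card = Pl.card * ((q ^ 2 - 1) * (q ^ 2 - q)) := by
    rw [Finset.card_eq_sum_card_fiberwise
      (f := fun p : (Fin n → F) × (Fin n → F) => span F ({p.1, p.2} : Set (Fin n → F))) (t := Pl) hmaps]
    rw [Finset.sum_congr rfl hfiber, Finset.sum_const, smul_eq_mul]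
  have hNat : Nat.card {T : Submodule F (Fin n → F) //
      Module.finrank F T = 2 ∧ ∀ t ∈ T, ∀ t' ∈ T, w t t' = 0} = Pl.card := by
    rw [Nat.card_eq_fintype_card, Fintype.card_subtype]
  -- arithmetic endgame
  rw [hNat]
  have hq1 : 1 ≤ q := by omega
  have c1 : 1 ≤ q ^ (2 * k) := Nat.one_le_pow _ _ (by omega)
  have c2 : q ≤ q ^ n := by
    calc q = q ^ 1 := (pow_one q).symm
    _ ≤ q ^ n := Nat.pow_le_pow_right hq1 (by omega)
  have c3 : q ^ (2 * k) ≤ q ^ n := Nat.pow_le_pow_right hq1 (by omega)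
  have c4 : q ≤ q ^ (n - 1) := by
    calc q = q ^ 1 := (pow_one q).symm
    _ ≤ q ^ (n - 1) := Nat.pow_le_pow_right hq1 (by omega)
  have c5 : 1 ≤ q ^ 2 := Nat.one_le_pow _ _ (by omega)
  have c6 : q ≤ q ^ 2 := by
    calc q = q ^ 1 := (pow_one q).symm
    _ ≤ q ^ 2 := Nat.pow_le_pow_right hq1 (by omega)
  have key := congrArg (fun m : ℕ => (m : ℚ)) (hPcard2.symm.trans hPcard1)
  simp only [Nat.cast_mul, Nat.cast_add, Nat.cast_pow, Nat.cast_sub c1, Nat.cast_sub c2,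
    Nat.cast_sub c3, Nat.cast_sub c4, Nat.cast_sub c5, Nat.cast_sub c6, Nat.cast_one] at key
  have hx1 : (1 : ℚ) < (q : ℚ) := by exact_mod_cast hq2
  have h3 : (0 : ℚ) < (q : ℚ) ^ 2 - 1 := by nlinarith
  have h4 : (0 : ℚ) < (q : ℚ) ^ 2 - (q : ℚ) := by nlinarith
  have hD : ((q : ℚ) ^ 2 - 1) * ((q : ℚ) ^ 2 - (q : ℚ)) ≠ 0 := ne_of_gt (mul_pos h3 h4)
  have hPl := (eq_div_iff hD).mpr key
  rw [hPl]
  set m := n - 2 with hm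
  have en : (q : ℚ) ^ n = (q : ℚ) ^ m * (q : ℚ) ^ 2 := by
    rw [← pow_add]
    congr 1
    omega
  have en1 : (q : ℚ) ^ (n - 1) = (q : ℚ) ^ m * (q : ℚ) := by
    rw [← pow_succ]
    congr 1
    omega
  rw [en, en1]
  have hm1 : (q : ℚ) - 1 ≠ 0 := ne_of_gt (by linarith)
  have hp1 : (q : ℚ) + 1 ≠ 0 := ne_of_gt (by linarith)
  have h3ne : (q : ℚ) ^ 2 - 1 ≠ 0 := ne_of_gt h3
  field_simp
  ring
end
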